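/- Let d ≥ 3 and let V : ℤ^d → ℝ be finitely supported with ‖G|V|‖_∞ < 1. Then ⟨V, γ_V^2⟩ − ⟨V, γ_V⟩ = 𝓔_{ℤ^d}(γ_V − 1, γ_V − 1), where 𝓔_{ℤ^d}(f,g) = (1/(4d)) Σ_{x∼y} (f(y)−f(x))(g(y)−g(x)) is the discrete Dirichlet form. -/

import Mathlib

open scoped BigOperators

noncomputable section

/-- Points of the lattice `ℤ^d`. -/
abbrev Zd (d : ℕ) := Fin d → ℤ

/-- One-step transition kernel of simple random walk on `ℤ^d`. -/
def srwStep (d : ℕ) (x y : Zd d) : ℝ :=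
  if (∑ i, |x i - y i|) = 1 then 1 / (2 * (d : ℝ)) else 0

/-- `n`-step transition probabilities of simple random walk on `ℤ^d`. -/
def srwP (d : ℕ) : ℕ → Zd d → Zd d → ℝ
  | 0, x, y => if x = y then 1 else 0
  | n + 1, x, y => ∑' z : Zd d, srwP d n x z * srwStep d z y

/-- Green function of the (continuous-time) simple random walk on `ℤ^d`,
`g(x,y) = E_x[∫_0^∞ 1{X_s = y} ds] = ∑_n p_n(x,y)`. -/
def green (d : ℕ) (x y : Zd d) : ℝ := ∑' n : ℕ, srwP d n x y

/-- The Green operator `G f (x) = ∑_y g(x,y) f(y)`. -/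
def Gop (d : ℕ) (f : Zd d → ℝ) (x : Zd d) : ℝ := ∑' y : Zd d, green d x y * f y

/-- The operator `GV : f ↦ G(V·f)` (composition of `G` with multiplication by `V`). -/
def GVop (d : ℕ) (V f : Zd d → ℝ) : Zd d → ℝ := Gop d fun y => V y * f y

/-- Neumann series representation of `(I - GV)⁻¹` applied to `h`
(valid when the operator norm `‖G|V|‖_∞` is `< 1`). -/
def neumann (d : ℕ) (V h : Zd d → ℝ) (x : Zd d) : ℝ := ∑' n : ℕ, (GVop d V)^[n] h x

/-- The gaugeFn function `γ_V = (I - GV)⁻¹ 1`. -/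
def gaugeFn (d : ℕ) (V : Zd d → ℝ) : Zd d → ℝ := neumann d V fun _ => 1

/-- The condition `‖G|V|‖_∞ < 1`. -/
def greenNormLtOne (d : ℕ) (V : Zd d → ℝ) : Prop :=
  ∃ c : ℝ, c < 1 ∧ ∀ x, Gop d (fun y => |V y|) x ≤ c

/-- The pairing `⟨u,v⟩_{ℤ^d} = ∑_z u(z) v(z)`. -/
def pairZ (d : ℕ) (u v : Zd d → ℝ) : ℝ := ∑' z : Zd d, u z * v z

/-- The discrete Dirichlet form `𝓔_{ℤ^d}(f,g) = (1/(4d)) ∑_{x∼y} (f(y)-f(x))(g(y)-g(x))`. -/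
def dirichletZ (d : ℕ) (f g : Zd d → ℝ) : ℝ :=
  (1 / (4 * (d : ℝ))) * ∑' p : Zd d × Zd d,
    if (∑ i, |p.1 i - p.2 i|) = 1 then (f p.2 - f p.1) * (g p.2 - g p.1) else 0

/-- The sup norm `‖f‖_∞` of a function on `ℤ^d`. -/
def supNorm (d : ℕ) (f : Zd d → ℝ) : ℝ := ⨆ x, |f x|

namespace GaugeAux

variable {d : ℕ}

/-- The signed unit-vector translate map. -/
def uv (x : Zd d) (p : Fin d × Bool) : Zd d :=
  fun j => x j + (if j = p.1 then (if p.2 then 1 else -1) else 0)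

/-- The neighbors of `x` as a finset. -/
def nbhd (x : Zd d) : Finset (Zd d) := Finset.image (uv x) Finset.univ

lemma mem_nbhd {x y : Zd d} : y ∈ nbhd x ↔ (∑ i, |x i - y i|) = 1 := by
  constructor
  · intro hy
    rcases Finset.mem_image.1 hy with ⟨p, -, rfl⟩
    have : ∀ j : Fin d, |x j - uv x p j| = if j = p.1 then 1 else 0 := by
      intro j
      simp only [uv]
      by_cases h : j = p.1 <;> cases p.2 <;> simp [h]
    rw [Finset.sum_congr rfl fun j _ => this j]
    simp
  · intro h
    have hnn : ∀ j : Fin d, (0:ℤ) ≤ |x j - y j| := fun j => abs_nonneg _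
    have hex : ∃ i : Fin d, |x i - y i| ≠ 0 := by
      by_contra hc
      push_neg at hc
      rw [Finset.sum_congr rfl fun j _ => hc j] at h
      simp at h
    rcases hex with ⟨i, hi⟩
    have hle : |x i - y i| ≤ 1 := by
      calc |x i - y i| ≤ ∑ j, |x j - y j| :=
            Finset.single_le_sum (fun j _ => hnn j) (Finset.mem_univ i)
        _ = 1 := h
    have hge : (1:ℤ) ≤ |x i - y i| := by
      have := hnn i
      omega
    have hii : |x i - y i| = 1 := le_antisymm hle hge
    have h2 : |x i - y i| + ∑ k ∈ Finset.univ.erase i, |x k - y k| = 1 := by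
      exact (Finset.add_sum_erase Finset.univ (fun k => |x k - y k|)
        (Finset.mem_univ i)).trans h
    have hz : ∑ k ∈ Finset.univ.erase i, |x k - y k| = 0 := by omega
    have hrest : ∀ j, j ≠ i → x j = y j := by
      intro j hj
      have h3 := (Finset.sum_eq_zero_iff_of_nonneg (fun k _ => hnn k)).1 hz j
        (Finset.mem_erase.2 ⟨hj, Finset.mem_univ j⟩)
      have h4 : x j - y j = 0 := abs_eq_zero.1 h3
      omega
    have hcase : x i - y i = 1 ∨ x i - y i = -1 := (abs_eq (by norm_num)).1 hii
    rcases hcase with h1 | h1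
    · refine Finset.mem_image.2 ⟨⟨i, false⟩, Finset.mem_univ _, ?_⟩
      funext j
      by_cases hj : j = i
      · subst hj; simp [uv]; omega
      · have := hrest j hj
        simp [uv, hj, this]
    · refine Finset.mem_image.2 ⟨⟨i, true⟩, Finset.mem_univ _, ?_⟩
      funext j
      by_cases hj : j = i
      · subst hj; simp [uv]; omega
      · have := hrest j hj
        simp [uv, hj, this]

lemma uv_injective (x : Zd d) : Function.Injective (uv x) := by
  rintro ⟨i, b⟩ ⟨i', b'⟩ h
  have h1 := congrFun h i
  simp only [uv] at h1
  by_cases hii : i = i'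
  · subst hii
    cases b <;> cases b' <;> simp_all <;> omega
  · exfalso
    cases b <;> cases b' <;> simp [hii] at h1 <;> omega

lemma card_nbhd (x : Zd d) : (nbhd x).card = 2 * d := by
  rw [nbhd, Finset.card_image_of_injective _ (uv_injective x)]
  simp [Finset.card_univ, mul_comm]

lemma adj_comm {x y : Zd d} :
    ((∑ i, |x i - y i|) = 1) ↔ ((∑ i, |y i - x i|) = 1) := by
  constructor <;> intro h <;> rw [← h] <;> exact Finset.sum_congr rfl fun j _ => (abs_sub_comm _ _)

lemma mem_nbhd_comm {x y : Zd d} : y ∈ nbhd x ↔ x ∈ nbhd y := by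
  rw [mem_nbhd, mem_nbhd, adj_comm]

lemma srwStep_nonneg (x y : Zd d) : 0 ≤ srwStep d x y := by
  unfold srwStep; split <;> positivity

lemma srwStep_symm (x y : Zd d) : srwStep d x y = srwStep d y x := by
  unfold srwStep
  by_cases h : (∑ i, |x i - y i|) = 1
  · rw [if_pos h, if_pos (adj_comm.1 h)]
  · rw [if_neg h, if_neg (fun hc => h (adj_comm.2 hc))]

lemma srwStep_eq_zero {x y : Zd d} (h : y ∉ nbhd x) : srwStep d x y = 0 := by
  unfold srwStep
  rw [if_neg (fun hc => h (mem_nbhd.2 hc))]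

lemma srwStep_eq_of_mem {x y : Zd d} (h : y ∈ nbhd x) :
    srwStep d x y = 1 / (2 * (d:ℝ)) := by
  unfold srwStep
  rw [if_pos (mem_nbhd.1 h)]

lemma sum_srwStep (hd : d ≠ 0) {x : Zd d} {F : Finset (Zd d)} (hF : nbhd x ⊆ F) :
    ∑ y ∈ F, srwStep d x y = 1 := by
  rw [← Finset.sum_subset hF (fun y _ hy => srwStep_eq_zero hy)]
  rw [Finset.sum_congr rfl fun y hy => srwStep_eq_of_mem hy]
  rw [Finset.sum_const, card_nbhd, nsmul_eq_mul]
  have : (d:ℝ) ≠ 0 := Nat.cast_ne_zero.2 hd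
  push_cast
  field_simp

end GaugeAux
namespace GaugeAux

variable {d : ℕ}

lemma srwP_nonneg : ∀ (n : ℕ) (x y : Zd d), 0 ≤ srwP d n x y := by
  intro n
  induction n with
  | zero => intro x y; unfold srwP; split <;> norm_num
  | succ n ih =>
    intro x y
    unfold srwP
    exact tsum_nonneg fun z => mul_nonneg (ih x z) (srwStep_nonneg z y)

lemma srwP_support_finite : ∀ (n : ℕ) (x : Zd d),
    (Function.support (srwP d n x)).Finite := by
  intro n
  induction n with
  | zero =>
    intro x
    apply Set.Finite.subset (Set.finite_singleton x)
    intro y hy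
    simp only [Function.mem_support] at hy
    unfold srwP at hy
    by_contra hne
    simp only [Set.mem_singleton_iff] at hne
    rw [if_neg (fun h => hne h.symm)] at hy
    exact hy rfl
  | succ n ih =>
    intro x
    apply Set.Finite.subset ((ih x).biUnion (fun z _ => (nbhd z).finite_toSet))
    intro y hy
    simp only [Function.mem_support] at hy
    unfold srwP at hy
    have : ∃ z, srwP d n x z * srwStep d z y ≠ 0 := by
      by_contra hc
      push_neg at hc
      exact hy (by simp [hc])
    rcases this with ⟨z, hz⟩
    have h1 : srwP d n x z ≠ 0 := fun h => hz (by simp [h])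
    have h2 : srwStep d z y ≠ 0 := fun h => hz (by simp [h])
    exact Set.mem_biUnion h1 (by
      by_contra hc
      exact h2 (srwStep_eq_zero (fun hm => hc hm)))

/-- Canonical finite support of `srwP d n x ·`. -/
def pSupp (n : ℕ) (x : Zd d) : Finset (Zd d) := (srwP_support_finite n x).toFinset

lemma srwP_eq_zero {n : ℕ} {x y : Zd d} (h : y ∉ pSupp n x) : srwP d n x y = 0 := by
  by_contra hc
  exact h ((srwP_support_finite n x).mem_toFinset.2 hc)

lemma srwP_succ_sum {n : ℕ} {x : Zd d} {F : Finset (Zd d)} (hF : pSupp n x ⊆ F) (y : Zd d) :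
    srwP d (n + 1) x y = ∑ z ∈ F, srwP d n x z * srwStep d z y := by
  show (∑' z, srwP d n x z * srwStep d z y) = _
  apply tsum_eq_sum
  intro z hz
  rw [srwP_eq_zero (fun hm => hz (hF hm)), zero_mul]

lemma srwP_succ_sum_left : ∀ (n : ℕ) {x : Zd d} {F : Finset (Zd d)}, nbhd x ⊆ F →
    ∀ y, srwP d (n + 1) x y = ∑ z ∈ F, srwStep d x z * srwP d n z y := by
  intro n
  induction n with
  | zero =>
    intro x F hF y
    rw [srwP_succ_sum (Finset.Subset.refl _) y]
    have hL : ∑ z ∈ pSupp 0 x, srwP d 0 x z * srwStep d z y = srwStep d x y := by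
      rw [Finset.sum_eq_single_of_mem x]
      · show (if x = x then (1:ℝ) else 0) * srwStep d x y = _
        rw [if_pos rfl, one_mul]
      · exact (srwP_support_finite 0 x).mem_toFinset.2 (by
          show srwP d 0 x x ≠ 0
          show (if x = x then (1:ℝ) else 0) ≠ 0
          rw [if_pos rfl]; norm_num)
      · intro z _ hz
        show srwP d 0 x z * srwStep d z y = 0
        have : srwP d 0 x z = 0 := by
          show (if x = z then (1:ℝ) else 0) = 0
          rw [if_neg (fun h => hz h.symm)]
        rw [this, zero_mul]
    rw [hL]
    have hR : ∀ z ∈ F, srwStep d x z * srwP d 0 z y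
        = srwStep d x z * (if z = y then 1 else 0) := by
      intro z _; rfl
    rw [Finset.sum_congr rfl hR]
    simp only [mul_ite, mul_one, mul_zero]
    rw [Finset.sum_ite_eq' F y (fun z => srwStep d x z)]
    by_cases hy : y ∈ F
    · rw [if_pos hy]
    · rw [if_neg hy, srwStep_eq_zero (fun hm => hy (hF hm))]
  | succ n ih =>
    intro x F hF y
    have hsub : pSupp (n+1) x ⊆ pSupp (n+1) x ∪ F.biUnion (fun z => pSupp n z) :=
      Finset.subset_union_left
    rw [srwP_succ_sum hsub y]
    calc ∑ w ∈ pSupp (n+1) x ∪ F.biUnion (fun z => pSupp n z),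
          srwP d (n+1) x w * srwStep d w y
        = ∑ w ∈ pSupp (n+1) x ∪ F.biUnion (fun z => pSupp n z),
            (∑ z ∈ F, srwStep d x z * srwP d n z w) * srwStep d w y :=
          Finset.sum_congr rfl fun w _ => by rw [ih hF w]
      _ = ∑ w ∈ pSupp (n+1) x ∪ F.biUnion (fun z => pSupp n z),
            ∑ z ∈ F, srwStep d x z * srwP d n z w * srwStep d w y :=
          Finset.sum_congr rfl fun w _ => by rw [Finset.sum_mul]
      _ = ∑ z ∈ F, ∑ w ∈ pSupp (n+1) x ∪ F.biUnion (fun z => pSupp n z),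
            srwStep d x z * srwP d n z w * srwStep d w y := Finset.sum_comm
      _ = ∑ z ∈ F, srwStep d x z * srwP d (n+1) z y := by
          apply Finset.sum_congr rfl
          intro z hz
          have hsub2 : pSupp n z ⊆ pSupp (n+1) x ∪ F.biUnion (fun z => pSupp n z) :=
            (Finset.subset_biUnion_of_mem _ hz).trans Finset.subset_union_right
          rw [srwP_succ_sum hsub2 y, Finset.mul_sum]
          exact Finset.sum_congr rfl fun w _ => mul_assoc _ _ _

end GaugeAux
namespace GaugeAux

variable {d : ℕ}

lemma srwP_symm : ∀ (n : ℕ) (x y : Zd d), srwP d n x y = srwP d n y x := by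
  intro n
  induction n with
  | zero =>
    intro x y
    show (if x = y then (1:ℝ) else 0) = (if y = x then (1:ℝ) else 0)
    by_cases h : x = y
    · rw [if_pos h, if_pos h.symm]
    · rw [if_neg h, if_neg (fun hc => h hc.symm)]
  | succ n ih =>
    intro x y
    have hsub : pSupp n x ⊆ pSupp n x ∪ nbhd y := Finset.subset_union_left
    have hsub2 : nbhd y ⊆ pSupp n x ∪ nbhd y := Finset.subset_union_right
    rw [srwP_succ_sum hsub y, srwP_succ_sum_left n hsub2 x]
    apply Finset.sum_congr rfl
    intro z _
    rw [ih x z, srwStep_symm, mul_comm]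

lemma srwP_chapman : ∀ (n m : ℕ) (x : Zd d) {F : Finset (Zd d)}, pSupp m x ⊆ F →
    ∀ y, srwP d (m + n) x y = ∑ z ∈ F, srwP d m x z * srwP d n z y := by
  intro n
  induction n with
  | zero =>
    intro m x F hF y
    have : ∀ z ∈ F, srwP d m x z * srwP d 0 z y
        = if z = y then srwP d m x z else 0 := by
      intro z _
      show srwP d m x z * (if z = y then (1:ℝ) else 0) = _
      by_cases h : z = y
      · rw [if_pos h, if_pos h, mul_one]
      · rw [if_neg h, if_neg h, mul_zero]
    rw [Finset.sum_congr rfl this, Finset.sum_ite_eq' F y (fun z => srwP d m x z)]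
    by_cases hy : y ∈ F
    · rw [if_pos hy, Nat.add_zero]
    · rw [if_neg hy, Nat.add_zero, srwP_eq_zero (fun hm => hy (hF hm))]
  | succ n ih =>
    intro m x F hF y
    have hkey : m + (n + 1) = (m + n) + 1 := by omega
    rw [hkey]
    have hsub : pSupp (m+n) x ⊆ pSupp (m+n) x ∪ F.biUnion (fun z => pSupp n z) :=
      Finset.subset_union_left
    rw [srwP_succ_sum hsub y]
    calc ∑ w ∈ pSupp (m+n) x ∪ F.biUnion (fun z => pSupp n z),
          srwP d (m+n) x w * srwStep d w y
        = ∑ w ∈ pSupp (m+n) x ∪ F.biUnion (fun z => pSupp n z),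
            (∑ z ∈ F, srwP d m x z * srwP d n z w) * srwStep d w y :=
          Finset.sum_congr rfl fun w _ => by rw [ih m x hF w]
      _ = ∑ w ∈ pSupp (m+n) x ∪ F.biUnion (fun z => pSupp n z),
            ∑ z ∈ F, srwP d m x z * srwP d n z w * srwStep d w y :=
          Finset.sum_congr rfl fun w _ => by rw [Finset.sum_mul]
      _ = ∑ z ∈ F, ∑ w ∈ pSupp (m+n) x ∪ F.biUnion (fun z => pSupp n z),
            srwP d m x z * srwP d n z w * srwStep d w y := Finset.sum_comm
      _ = ∑ z ∈ F, srwP d m x z * srwP d (n+1) z y := by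
          apply Finset.sum_congr rfl
          intro z hz
          have hsub2 : pSupp n z ⊆ pSupp (m+n) x ∪ F.biUnion (fun z => pSupp n z) :=
            (Finset.subset_biUnion_of_mem _ hz).trans Finset.subset_union_right
          rw [srwP_succ_sum hsub2 y, Finset.mul_sum]
          exact Finset.sum_congr rfl fun w _ => mul_assoc _ _ _

end GaugeAux
namespace GaugeAux

variable {d : ℕ}

/-- Summability of the Green series at a pair of points. -/
def SG (d : ℕ) (x y : Zd d) : Prop := Summable (fun n => srwP d n x y)

lemma sg_step (hd : d ≠ 0) {x y z : Zd d} (hz : z ∈ nbhd y) (h : SG d x y) :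
    SG d x z := by
  have hpos : (0:ℝ) < 1 / (2 * d) := by
    have : (0:ℝ) < (d:ℝ) := by
      have := Nat.pos_of_ne_zero hd
      exact_mod_cast this
    positivity
  have hle : ∀ n, srwP d n x z ≤ (2 * d) * srwP d (n+1) x y := by
    intro n
    have hsub : pSupp n x ⊆ pSupp n x ∪ {z} := Finset.subset_union_left
    rw [srwP_succ_sum hsub y]
    have hmem : z ∈ pSupp n x ∪ {z} := Finset.mem_union_right _ (Finset.mem_singleton_self z)
    have hterm : srwP d n x z * srwStep d z y
        ≤ ∑ w ∈ pSupp n x ∪ {z}, srwP d n x w * srwStep d w y :=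
      Finset.single_le_sum (fun w _ => mul_nonneg (srwP_nonneg n x w) (srwStep_nonneg w y))
        hmem
    have hstepval : srwStep d z y = 1 / (2 * d) :=
      srwStep_eq_of_mem (mem_nbhd_comm.1 hz)
    rw [hstepval] at hterm
    have h2d : (0:ℝ) < 2 * d := by
      have : (0:ℝ) < (d:ℝ) := by
        have := Nat.pos_of_ne_zero hd
        exact_mod_cast this
      positivity
    calc srwP d n x z = (2*d) * (srwP d n x z * (1 / (2*d))) := by
          field_simp
      _ ≤ (2*d) * ∑ w ∈ pSupp n x ∪ {z}, srwP d n x w * srwStep d w y := by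
          apply mul_le_mul_of_nonneg_left hterm (le_of_lt h2d)
  have hsum1 : Summable (fun n => srwP d (n+1) x y) := (summable_nat_add_iff 1).2 h
  exact Summable.of_nonneg_of_le (fun n => srwP_nonneg n x z) hle (hsum1.mul_left _)

/-- Connectivity of the lattice: a predicate stable under neighbor moves and
true somewhere is true everywhere. -/
lemma reach (P : Zd d → Prop) (hstep : ∀ y z, z ∈ nbhd y → P y → P z)
    {y₀ : Zd d} (hy : P y₀) (y' : Zd d) : P y' := by
  suffices h : ∀ (D : ℕ) (y : Zd d), (∑ i, |y i - y' i|) ≤ D → P y → P y' by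
    exact h (∑ i, |y₀ i - y' i|).toNat y₀ (Int.self_le_toNat _) hy
  intro D
  induction D with
  | zero =>
    intro y hle hy
    have : ∀ i, |y i - y' i| = 0 := by
      intro i
      have h1 : |y i - y' i| ≤ ∑ j, |y j - y' j| :=
        Finset.single_le_sum (f := fun j => |y j - y' j|) (fun j _ => abs_nonneg _)
          (Finset.mem_univ i)
      have h2 : 0 ≤ |y i - y' i| := abs_nonneg _
      omega
    have : y = y' := by
      funext i
      have := abs_eq_zero.1 (this i)
      omega
    exact this ▸ hy
  | succ D ih =>
    intro y hle hy
    by_cases heq : y = y'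
    · exact heq ▸ hy
    · have hex : ∃ i, y i ≠ y' i := by
        by_contra hc
        push_neg at hc
        exact heq (funext hc)
      rcases hex with ⟨i, hi⟩
      set sgn : ℤ := if y i < y' i then 1 else -1 with hsgn
      set z : Zd d := Function.update y i (y i + sgn) with hz
      have hzj : ∀ j, j ≠ i → z j = y j := fun j hj => Function.update_of_ne hj _ y
      have hzi : z i = y i + sgn := Function.update_self i _ y
      have habs : |y i - z i| = 1 := by
        rw [hzi, hsgn]
        rcases lt_or_gt_of_ne hi with hlt | hgt
        · rw [if_pos hlt]; norm_num
        · rw [if_neg (by omega)]; norm_num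
      have hznb : z ∈ nbhd y := by
        rw [mem_nbhd]
        rw [← Finset.add_sum_erase Finset.univ (fun j => |y j - z j|) (Finset.mem_univ i)]
        rw [habs]
        have : ∀ j ∈ Finset.univ.erase i, |y j - z j| = 0 := by
          intro j hj
          rw [hzj j (Finset.mem_erase.1 hj).1]
          simp
        rw [Finset.sum_congr rfl this]
        simp
      have hdist : (∑ j, |z j - y' j|) + 1 = ∑ j, |y j - y' j| := by
        rw [← Finset.add_sum_erase Finset.univ (fun j => |z j - y' j|) (Finset.mem_univ i),
            ← Finset.add_sum_erase Finset.univ (fun j => |y j - y' j|) (Finset.mem_univ i)]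
        have he : ∑ j ∈ Finset.univ.erase i, |z j - y' j|
            = ∑ j ∈ Finset.univ.erase i, |y j - y' j| :=
          Finset.sum_congr rfl fun j hj => by rw [hzj j (Finset.mem_erase.1 hj).1]
        rw [he]
        have hterm : |z i - y' i| + 1 = |y i - y' i| := by
          rw [hzi, hsgn]
          rcases lt_or_gt_of_ne hi with hlt | hgt
          · rw [if_pos hlt]
            rw [abs_of_nonpos (by omega), abs_of_nonpos (by omega)]
            ring
          · rw [if_neg (by omega)]
            rw [abs_of_nonneg (by omega), abs_of_nonneg (by omega)]
            ring
        omega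
      have hzle : (∑ j, |z j - y' j|) ≤ D := by omega
      exact ih z hzle (hstep y z hznb hy)

lemma sg_all (hd : d ≠ 0) {x₀ y₀ : Zd d} (h : SG d x₀ y₀) (x y : Zd d) : SG d x y := by
  have h1 : ∀ y', SG d x₀ y' :=
    reach (P := fun y' => SG d x₀ y') (fun a b hb ha => sg_step hd hb ha) h
  have h2 : SG d y x₀ := by
    have := h1 y
    unfold SG at this ⊢
    simpa only [srwP_symm] using this
  have h3 : ∀ x', SG d y x' :=
    reach (P := fun x' => SG d y x') (fun a b hb ha => sg_step hd hb ha) h2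
  have := h3 x
  unfold SG at this ⊢
  simpa only [srwP_symm] using this

end GaugeAux
namespace GaugeAux

variable {d : ℕ}

lemma green_nonneg (x y : Zd d) : 0 ≤ green d x y :=
  tsum_nonneg fun n => srwP_nonneg n x y

lemma Gop_eq_sum {f : Zd d → ℝ} {F : Finset (Zd d)} (h : ∀ y, f y ≠ 0 → y ∈ F)
    (x : Zd d) : Gop d f x = ∑ y ∈ F, green d x y * f y :=
  tsum_eq_sum fun y hy => by
    have : f y = 0 := by
      by_contra hc
      exact hy (h y hc)
    rw [this, mul_zero]

section Gauge

variable {V : Zd d → ℝ} {hVfin : (Function.support V).Finite} {c : ℝ}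

lemma c_nonneg (hc : ∀ x, Gop d (fun y => |V y|) x ≤ c) : 0 ≤ c := by
  refine le_trans ?_ (hc (fun _ => 0))
  exact tsum_nonneg fun y => mul_nonneg (green_nonneg _ _) (abs_nonneg _)

lemma GVop_bound (V : Zd d → ℝ) (hVfin : (Function.support V).Finite) (c : ℝ)
    (hc : ∀ x, Gop d (fun y => |V y|) x ≤ c)
    {g : Zd d → ℝ} {M : ℝ} (hM : 0 ≤ M) (hg : ∀ y, |g y| ≤ M)
    (x : Zd d) : |GVop d V g x| ≤ M * c := by
  have hGV : GVop d V g x = ∑ y ∈ hVfin.toFinset, green d x y * (V y * g y) := by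
    apply Gop_eq_sum
    intro y hy
    apply hVfin.mem_toFinset.2
    intro hVy
    exact hy (by rw [hVy, zero_mul])
  have hGabs : Gop d (fun y => |V y|) x = ∑ y ∈ hVfin.toFinset, green d x y * |V y| := by
    apply Gop_eq_sum
    intro y hy
    apply hVfin.mem_toFinset.2
    intro hVy
    exact hy (by rw [hVy, abs_zero])
  rw [hGV]
  calc |∑ y ∈ hVfin.toFinset, green d x y * (V y * g y)|
      ≤ ∑ y ∈ hVfin.toFinset, |green d x y * (V y * g y)| := Finset.abs_sum_le_sum_abs _ _
    _ ≤ ∑ y ∈ hVfin.toFinset, green d x y * |V y| * M := by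
        apply Finset.sum_le_sum
        intro y _
        rw [abs_mul, abs_mul, abs_of_nonneg (green_nonneg x y), mul_assoc]
        exact mul_le_mul_of_nonneg_left
          (mul_le_mul_of_nonneg_left (hg y) (abs_nonneg _))
          (green_nonneg x y)
    _ = (∑ y ∈ hVfin.toFinset, green d x y * |V y|) * M := (Finset.sum_mul _ _ _).symm
    _ ≤ c * M := by
        apply mul_le_mul_of_nonneg_right _ hM
        rw [← hGabs]
        exact hc x
    _ = M * c := mul_comm _ _

lemma iter_bound (V : Zd d → ℝ) (hVfin : (Function.support V).Finite) (c : ℝ)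
    (hc : ∀ x, Gop d (fun y => |V y|) x ≤ c) : ∀ (n : ℕ) (x : Zd d),
    |(GVop d V)^[n] (fun _ => 1) x| ≤ c ^ n := by
  intro n
  induction n with
  | zero => intro x; simp
  | succ n ih =>
    intro x
    rw [Function.iterate_succ_apply']
    calc |GVop d V ((GVop d V)^[n] fun _ => 1) x| ≤ c ^ n * c :=
          GVop_bound V hVfin c hc (pow_nonneg (c_nonneg hc) n) ih x
      _ = c ^ (n+1) := (pow_succ c n).symm

lemma iter_summable (V : Zd d → ℝ) (hVfin : (Function.support V).Finite) (c : ℝ)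
    (hc : ∀ x, Gop d (fun y => |V y|) x ≤ c) (hc1 : c < 1) (x : Zd d) :
    Summable (fun n => (GVop d V)^[n] (fun _ => 1) x) := by
  apply Summable.of_abs
  apply Summable.of_nonneg_of_le (fun n => abs_nonneg _)
    (fun n => iter_bound V hVfin c hc n x)
  exact summable_geometric_of_lt_one (c_nonneg hc) hc1

lemma gauge_fixed (V : Zd d → ℝ) (hVfin : (Function.support V).Finite) (c : ℝ)
    (hc : ∀ x, Gop d (fun y => |V y|) x ≤ c) (hc1 : c < 1) (x : Zd d) :
    gaugeFn d V x = 1 + ∑ y ∈ hVfin.toFinset, green d x y * (V y * gaugeFn d V y) := by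
  have hsum := iter_summable V hVfin c hc hc1
  have h0 : gaugeFn d V x
      = (fun _ => (1:ℝ)) x + ∑' n, (GVop d V)^[n+1] (fun _ => 1) x := by
    unfold gaugeFn neumann
    exact Summable.tsum_eq_zero_add (hsum x)
  rw [h0]
  congr 1
  have hterm : ∀ n, (GVop d V)^[n+1] (fun _ => 1) x
      = ∑ y ∈ hVfin.toFinset, green d x y * (V y * (GVop d V)^[n] (fun _ => 1) y) := by
    intro n
    rw [Function.iterate_succ_apply']
    apply Gop_eq_sum
    intro y hy
    apply hVfin.mem_toFinset.2
    intro hVy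
    exact hy (by rw [hVy, zero_mul])
  rw [tsum_congr hterm]
  rw [Summable.tsum_finsetSum (fun y _ => ((hsum y).mul_left (V y)).mul_left (green d x y))]
  apply Finset.sum_congr rfl
  intro y _
  rw [tsum_mul_left, tsum_mul_left]
  rfl

end Gauge

end GaugeAux
namespace GaugeAux

variable {d : ℕ}

lemma telescope (f : ℕ → ℝ) (M : ℕ) : ∀ N, M ≤ N →
    ∑ n ∈ Finset.Ico M N, f (n+1) = (∑ n ∈ Finset.Ico M N, f n) - f M + f N := by
  intro N
  induction N with
  | zero =>
    intro h
    have : M = 0 := Nat.le_zero.1 h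
    subst this
    simp
  | succ N ih =>
    intro h
    rcases Nat.lt_or_ge M (N+1) with hlt | hge
    · have hMN : M ≤ N := Nat.lt_succ_iff.1 hlt
      rw [Finset.sum_Ico_succ_top hMN, Finset.sum_Ico_succ_top hMN, ih hMN]
      ring
    · have : M = N + 1 := le_antisymm h hge
      subst this
      simp

/-- Expansion of the Dirichlet sum of a finitely supported function. -/
lemma energy_sum_eq (hd : d ≠ 0) (f : Zd d → ℝ) (T : Finset (Zd d))
    (h1 : ∀ x, f x ≠ 0 → x ∈ T) (h2 : ∀ x, f x ≠ 0 → nbhd x ⊆ T) :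
    ∑' p : Zd d × Zd d, (if (∑ i, |p.1 i - p.2 i|) = 1
        then (f p.2 - f p.1) * (f p.2 - f p.1) else 0)
      = 4*(d:ℝ) * ∑ x ∈ T, f x * (f x - ∑ z ∈ T, srwStep d x z * f z) := by
  have hdpos : (0:ℝ) < (d:ℝ) := by exact_mod_cast Nat.pos_of_ne_zero hd
  have hzero : ∀ p : Zd d × Zd d, p ∉ T ×ˢ T →
      (if (∑ i, |p.1 i - p.2 i|) = 1 then (f p.2 - f p.1) * (f p.2 - f p.1) else 0) = 0 := by
    rintro ⟨x, z⟩ hp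
    by_cases hadj : (∑ i, |x i - z i|) = 1
    · rw [if_pos hadj]
      have hnot : ¬(x ∈ T ∧ z ∈ T) := by
        intro hc
        exact hp (Finset.mem_product.2 ⟨hc.1, hc.2⟩)
      have hx : f x = 0 := by
        by_contra hfx
        exact hnot ⟨h1 x hfx, h2 x hfx (mem_nbhd.2 hadj)⟩
      have hz : f z = 0 := by
        by_contra hfz
        exact hnot ⟨h2 z hfz (mem_nbhd_comm.2 (mem_nbhd.2 hadj)), h1 z hfz⟩
      rw [hx, hz]
      ring
    · rw [if_neg hadj]
  rw [tsum_eq_sum (s := T ×ˢ T) hzero, Finset.sum_product]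
  have hstep : ∀ x z : Zd d,
      (if (∑ i, |x i - z i|) = 1 then (f z - f x) * (f z - f x) else 0)
        = 2*(d:ℝ) * srwStep d x z * ((f z - f x) * (f z - f x)) := by
    intro x z
    unfold srwStep
    by_cases hadj : (∑ i, |x i - z i|) = 1
    · rw [if_pos hadj, if_pos hadj]
      field_simp
    · rw [if_neg hadj, if_neg hadj]
      ring
  rw [Finset.sum_congr rfl fun x _ => Finset.sum_congr rfl fun z _ => hstep x z]
  have hexp : ∀ x z : Zd d, 2*(d:ℝ) * srwStep d x z * ((f z - f x) * (f z - f x))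
      = 2*(d:ℝ) * srwStep d x z * f z * f z + 2*(d:ℝ) * srwStep d x z * f x * f x
        - 2 * (2*(d:ℝ) * srwStep d x z * f x * f z) := by
    intro x z; ring
  rw [Finset.sum_congr rfl fun x _ => Finset.sum_congr rfl fun z _ => hexp x z]
  have hsplit : ∀ x : Zd d,
      ∑ z ∈ T, (2*(d:ℝ) * srwStep d x z * f z * f z + 2*(d:ℝ) * srwStep d x z * f x * f x
        - 2 * (2*(d:ℝ) * srwStep d x z * f x * f z))
      = (∑ z ∈ T, 2*(d:ℝ) * srwStep d x z * f z * f z)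
        + (∑ z ∈ T, 2*(d:ℝ) * srwStep d x z * f x * f x)
        - 2 * ∑ z ∈ T, 2*(d:ℝ) * srwStep d x z * f x * f z := by
    intro x
    rw [Finset.sum_sub_distrib, Finset.sum_add_distrib, ← Finset.mul_sum]
  rw [Finset.sum_congr rfl fun x _ => hsplit x]
  rw [Finset.sum_sub_distrib, Finset.sum_add_distrib]
  have hS1 : ∑ x ∈ T, ∑ z ∈ T, 2*(d:ℝ) * srwStep d x z * f z * f z
      = ∑ x ∈ T, ∑ z ∈ T, 2*(d:ℝ) * srwStep d x z * f x * f x := by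
    rw [Finset.sum_comm]
    exact Finset.sum_congr rfl fun x _ => Finset.sum_congr rfl fun z _ => by
      rw [srwStep_symm]
  have hS2 : ∀ x ∈ T, ∑ z ∈ T, 2*(d:ℝ) * srwStep d x z * f x * f x
      = 2*(d:ℝ) * (f x * f x) := by
    intro x _
    by_cases hfx : f x = 0
    · rw [hfx]
      simp
    · have : ∑ z ∈ T, 2*(d:ℝ) * srwStep d x z * f x * f x
          = 2*(d:ℝ) * (f x * f x) * ∑ z ∈ T, srwStep d x z := by
        rw [Finset.mul_sum]
        exact Finset.sum_congr rfl fun z _ => by ring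
      rw [this, sum_srwStep hd (h2 x hfx), mul_one]
  have hS3 : ∀ x ∈ T, ∑ z ∈ T, 2*(d:ℝ) * srwStep d x z * f x * f z
      = 2*(d:ℝ) * f x * ∑ z ∈ T, srwStep d x z * f z := by
    intro x _
    rw [Finset.mul_sum]
    exact Finset.sum_congr rfl fun z _ => by ring
  rw [hS1, Finset.sum_congr rfl hS2]
  have hS3' : ∀ x ∈ T, 2 * ∑ z ∈ T, 2*(d:ℝ) * srwStep d x z * f x * f z
      = 2 * (2*(d:ℝ) * f x * ∑ z ∈ T, srwStep d x z * f z) := fun x hx => by rw [hS3 x hx]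
  rw [Finset.sum_congr rfl hS3']
  conv_rhs => rw [Finset.mul_sum]
  rw [← Finset.sum_add_distrib, ← Finset.sum_sub_distrib]
  exact Finset.sum_congr rfl fun x _ => by ring

end GaugeAux
namespace GaugeAux

variable {d : ℕ}

/-- The space-truncated Neumann piece `v(x) = ∑_{y∈s} c(y) ∑_{M≤n<N} p_n(x,y)`. -/
def vFn (s : Finset (Zd d)) (c : Zd d → ℝ) (M N : ℕ) (x : Zd d) : ℝ :=
  ∑ y ∈ s, c y * ∑ n ∈ Finset.Ico M N, srwP d n x y

/-- A finite set containing the support of `vFn`. -/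
def VS (s : Finset (Zd d)) (M N : ℕ) : Finset (Zd d) :=
  s.biUnion fun y => (Finset.Ico M N).biUnion fun n => pSupp n y

lemma vFn_eq_zero {s : Finset (Zd d)} {c : Zd d → ℝ} {M N : ℕ} {x : Zd d}
    (h : x ∉ VS s M N) : vFn s c M N x = 0 := by
  apply Finset.sum_eq_zero
  intro y hy
  have : ∀ n ∈ Finset.Ico M N, srwP d n x y = 0 := by
    intro n hn
    rw [srwP_symm]
    apply srwP_eq_zero
    intro hmem
    exact h (Finset.mem_biUnion.2 ⟨y, hy, Finset.mem_biUnion.2 ⟨n, hn, hmem⟩⟩)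
  rw [Finset.sum_congr rfl this]
  simp

lemma step_vFn (s : Finset (Zd d)) (c : Zd d → ℝ) {M N : ℕ} (hMN : M ≤ N)
    (x : Zd d) {F : Finset (Zd d)} (hF : nbhd x ⊆ F) :
    ∑ z ∈ F, srwStep d x z * vFn s c M N z
      = vFn s c M N x - (∑ y ∈ s, c y * srwP d M x y)
        + ∑ y ∈ s, c y * srwP d N x y := by
  have hz : ∀ z : Zd d, srwStep d x z * vFn s c M N z
      = ∑ y ∈ s, ∑ n ∈ Finset.Ico M N, c y * (srwStep d x z * srwP d n z y) := by
    intro z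
    unfold vFn
    rw [Finset.mul_sum]
    apply Finset.sum_congr rfl
    intro y _
    rw [Finset.mul_sum, Finset.mul_sum]
    apply Finset.sum_congr rfl
    intro n _
    ring
  have h1 : ∑ z ∈ F, srwStep d x z * vFn s c M N z
      = ∑ y ∈ s, c y * ∑ n ∈ Finset.Ico M N, ∑ z ∈ F, srwStep d x z * srwP d n z y := by
    rw [Finset.sum_congr rfl fun z _ => hz z, Finset.sum_comm]
    apply Finset.sum_congr rfl
    intro y _
    rw [Finset.sum_comm, Finset.mul_sum]
    apply Finset.sum_congr rfl
    intro n _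
    rw [Finset.mul_sum]
  rw [h1]
  have h2 : ∀ y ∈ s, c y * ∑ n ∈ Finset.Ico M N, ∑ z ∈ F, srwStep d x z * srwP d n z y
      = c y * ((∑ n ∈ Finset.Ico M N, srwP d n x y) - srwP d M x y + srwP d N x y) := by
    intro y _
    congr 1
    have : ∀ n ∈ Finset.Ico M N, ∑ z ∈ F, srwStep d x z * srwP d n z y
        = srwP d (n+1) x y := fun n _ => (srwP_succ_sum_left n hF y).symm
    rw [Finset.sum_congr rfl this]
    exact telescope (fun n => srwP d n x y) M N hMN
  rw [Finset.sum_congr rfl h2]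
  have h3 : ∀ y ∈ s, c y * ((∑ n ∈ Finset.Ico M N, srwP d n x y) - srwP d M x y + srwP d N x y)
      = (c y * ∑ n ∈ Finset.Ico M N, srwP d n x y - c y * srwP d M x y)
        + c y * srwP d N x y := by
    intro y _; ring
  rw [Finset.sum_congr rfl h3, Finset.sum_add_distrib, Finset.sum_sub_distrib]
  rfl

lemma dot_p (y' y : Zd d) (n K : ℕ) {T : Finset (Zd d)} (hT : pSupp n y' ⊆ T) :
    ∑ x ∈ T, srwP d n x y' * srwP d K x y = srwP d (n + K) y' y := by
  rw [srwP_chapman K n y' hT y]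
  exact Finset.sum_congr rfl fun x _ => by rw [srwP_symm n x y']

/-- CORE: the Dirichlet energy of a truncated piece. -/
lemma energy_vFn (hd : d ≠ 0) (s : Finset (Zd d)) (c : Zd d → ℝ) {M N : ℕ} (hMN : M ≤ N) :
    ∑' p : Zd d × Zd d, (if (∑ i, |p.1 i - p.2 i|) = 1
        then (vFn s c M N p.2 - vFn s c M N p.1) * (vFn s c M N p.2 - vFn s c M N p.1) else 0)
      = 4*(d:ℝ) * ∑ y ∈ s, ∑ y' ∈ s, c y * c y' *
          ∑ n ∈ Finset.Ico M N, (srwP d (n+M) y' y - srwP d (n+N) y' y) := by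
  set T : Finset (Zd d) := VS s M N ∪ (VS s M N).biUnion nbhd with hT
  have hTsub : VS s M N ⊆ T := Finset.subset_union_left
  have h1 : ∀ x, vFn s c M N x ≠ 0 → x ∈ T := by
    intro x hx
    by_contra hc
    exact hx (vFn_eq_zero (fun hm => hc (hTsub hm)))
  have h2 : ∀ x, vFn s c M N x ≠ 0 → nbhd x ⊆ T := by
    intro x hx
    have hxV : x ∈ VS s M N := by
      by_contra hc
      exact hx (vFn_eq_zero hc)
    exact (Finset.subset_biUnion_of_mem _ hxV).trans Finset.subset_union_right
  rw [energy_sum_eq hd _ T h1 h2]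
  congr 1
  have hstepform : ∀ x ∈ T,
      vFn s c M N x * (vFn s c M N x - ∑ z ∈ T, srwStep d x z * vFn s c M N z)
      = vFn s c M N x * ((∑ y ∈ s, c y * srwP d M x y) - ∑ y ∈ s, c y * srwP d N x y) := by
    intro x _
    by_cases hx : vFn s c M N x = 0
    · rw [hx, zero_mul, zero_mul]
    · rw [step_vFn s c hMN x (h2 x hx)]
      ring
  rw [Finset.sum_congr rfl hstepform]
  have hinner : ∀ (K : ℕ) (y : Zd d), ∑ x ∈ T, vFn s c M N x * srwP d K x y
      = ∑ y' ∈ s, c y' * ∑ n ∈ Finset.Ico M N, srwP d (n+K) y' y := by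
    intro K y
    have hx : ∀ x : Zd d, vFn s c M N x * srwP d K x y
        = ∑ y' ∈ s, ∑ n ∈ Finset.Ico M N, c y' * (srwP d n x y' * srwP d K x y) := by
      intro x
      unfold vFn
      rw [Finset.sum_mul]
      apply Finset.sum_congr rfl
      intro y' _
      rw [Finset.mul_sum, Finset.sum_mul]
      apply Finset.sum_congr rfl
      intro n _
      ring
    rw [Finset.sum_congr rfl fun x _ => hx x, Finset.sum_comm]
    apply Finset.sum_congr rfl
    intro y' hy'
    rw [Finset.sum_comm, Finset.mul_sum]
    apply Finset.sum_congr rfl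
    intro n hn
    have hsupp : pSupp n y' ⊆ T := by
      refine le_trans ?_ hTsub
      exact (Finset.subset_biUnion_of_mem (fun n => pSupp n y') hn).trans
        (Finset.subset_biUnion_of_mem
          (fun y => (Finset.Ico M N).biUnion fun n => pSupp n y) hy')
    rw [← Finset.mul_sum, dot_p y' y n K hsupp]
  have hper : ∀ x ∈ T,
      vFn s c M N x * ((∑ y ∈ s, c y * srwP d M x y) - ∑ y ∈ s, c y * srwP d N x y)
      = (∑ y ∈ s, c y * (vFn s c M N x * srwP d M x y))
        - ∑ y ∈ s, c y * (vFn s c M N x * srwP d N x y) := by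
    intro x _
    have hsub : (∑ y ∈ s, c y * srwP d M x y) - ∑ y ∈ s, c y * srwP d N x y
        = ∑ y ∈ s, (c y * srwP d M x y - c y * srwP d N x y) := by rw [Finset.sum_sub_distrib]
    rw [hsub, Finset.mul_sum, ← Finset.sum_sub_distrib]
    apply Finset.sum_congr rfl
    intro y _
    ring
  rw [Finset.sum_congr rfl hper, Finset.sum_sub_distrib, Finset.sum_comm,
    (Finset.sum_comm (s := T) (t := s) (f := fun x y => c y * (vFn s c M N x * srwP d N x y)))]
  have hcol : ∀ (K : ℕ), ∑ y ∈ s, ∑ x ∈ T, c y * (vFn s c M N x * srwP d K x y)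
      = ∑ y ∈ s, c y * ∑ y' ∈ s, c y' * ∑ n ∈ Finset.Ico M N, srwP d (n+K) y' y := by
    intro K
    apply Finset.sum_congr rfl
    intro y _
    rw [← Finset.mul_sum]
    congr 1
    rw [← hinner K y]
  rw [hcol M, hcol N, ← Finset.sum_sub_distrib]
  apply Finset.sum_congr rfl
  intro y _
  rw [← mul_sub, ← Finset.sum_sub_distrib, Finset.mul_sum]
  apply Finset.sum_congr rfl
  intro y' _
  rw [← mul_sub, ← Finset.sum_sub_distrib]
  ring

end GaugeAux
namespace GaugeAux

variable {d : ℕ}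

/-- Tail of the Green series. -/
def tailG (K : ℕ) (x y : Zd d) : ℝ := ∑' m, srwP d (m + K) x y

lemma tailG_nonneg (K : ℕ) (x y : Zd d) : 0 ≤ tailG K x y :=
  tsum_nonneg fun m => srwP_nonneg _ x y

lemma tailG_eq (K : ℕ) {x y : Zd d} (h : Summable fun n => srwP d n x y) :
    tailG K x y = green d x y - ∑ n ∈ Finset.range K, srwP d n x y := by
  have := Summable.sum_add_tsum_nat_add (f := fun n => srwP d n x y) K h
  unfold tailG green
  linarith

lemma tailG_anti {x y : Zd d} (h : Summable fun n => srwP d n x y)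
    {K K' : ℕ} (hK : K ≤ K') : tailG K' x y ≤ tailG K x y := by
  rw [tailG_eq K h, tailG_eq K' h]
  have : ∑ n ∈ Finset.range K, srwP d n x y ≤ ∑ n ∈ Finset.range K', srwP d n x y := by
    apply Finset.sum_le_sum_of_subset_of_nonneg (Finset.range_subset_range.2 hK)
    intro n _ _
    exact srwP_nonneg n x y
  linarith

lemma tailG_tendsto_zero {x y : Zd d} (h : Summable fun n => srwP d n x y) :
    Filter.Tendsto (fun K => tailG K x y) Filter.atTop (nhds 0) := by
  have h1 : Filter.Tendsto (fun K => ∑ n ∈ Finset.range K, srwP d n x y)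
      Filter.atTop (nhds (green d x y)) := h.hasSum.tendsto_sum_nat
  have h2 : Filter.Tendsto (fun K => green d x y - ∑ n ∈ Finset.range K, srwP d n x y)
      Filter.atTop (nhds (green d x y - green d x y)) :=
    (tendsto_const_nhds).sub h1
  rw [sub_self] at h2
  refine h2.congr fun K => ?_
  rw [tailG_eq K h]

/-- Partial sums of shifted transition probabilities are bounded by tails. -/
lemma sum_Ico_le_tail {x y : Zd d} (h : Summable fun n => srwP d n x y)
    (M N K : ℕ) (hMK : M + K ≥ M + K) :
    ∑ n ∈ Finset.Ico M N, srwP d (n + K) x y ≤ tailG (M + K) x y := by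
  rw [Finset.sum_Ico_eq_sum_range]
  have hterm : ∀ i, srwP d (M + i + K) x y = srwP d (i + (M + K)) x y := by
    intro i
    congr 1
    omega
  rw [Finset.sum_congr rfl fun i _ => hterm i]
  apply Summable.sum_le_tsum
  · intro n _
    exact srwP_nonneg _ x y
  · exact (summable_nat_add_iff (M + K)).2 h

/-- The summand in `dirichletZ` vanishes off `T ×ˢ T`. -/
lemma dir_zero (f : Zd d → ℝ) (T : Finset (Zd d))
    (h1 : ∀ x, f x ≠ 0 → x ∈ T) (h2 : ∀ x, f x ≠ 0 → nbhd x ⊆ T) :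
    ∀ p : Zd d × Zd d, p ∉ T ×ˢ T →
      (if (∑ i, |p.1 i - p.2 i|) = 1 then (f p.2 - f p.1) * (f p.2 - f p.1) else 0) = 0 := by
  rintro ⟨x, z⟩ hp
  by_cases hadj : (∑ i, |x i - z i|) = 1
  · rw [if_pos hadj]
    have hnot : ¬(x ∈ T ∧ z ∈ T) := by
      intro hc
      exact hp (Finset.mem_product.2 ⟨hc.1, hc.2⟩)
    have hx : f x = 0 := by
      by_contra hfx
      exact hnot ⟨h1 x hfx, h2 x hfx (mem_nbhd.2 hadj)⟩
    have hz : f z = 0 := by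
      by_contra hfz
      exact hnot ⟨h2 z hfz (mem_nbhd_comm.2 (mem_nbhd.2 hadj)), h1 z hfz⟩
    rw [hx, hz]
    ring
  · rw [if_neg hadj]

lemma vFn_split (s : Finset (Zd d)) (c : Zd d → ℝ) {M N : ℕ} (hMN : M ≤ N) (x : Zd d) :
    vFn s c 0 N x = vFn s c 0 M x + vFn s c M N x := by
  unfold vFn
  rw [← Finset.sum_add_distrib]
  apply Finset.sum_congr rfl
  intro y _
  rw [← mul_add]
  congr 1
  exact (Finset.sum_Ico_consecutive _ (Nat.zero_le M) hMN).symm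

lemma vFn_tendsto (hsum : ∀ x y, Summable fun n => srwP d n x y)
    (s : Finset (Zd d)) (c : Zd d → ℝ) (x : Zd d) :
    Filter.Tendsto (fun N => vFn s c 0 N x) Filter.atTop
      (nhds (∑ y ∈ s, c y * green d x y)) := by
  apply tendsto_finset_sum
  intro y _
  have h1 : Filter.Tendsto (fun N => ∑ n ∈ Finset.range N, srwP d n x y)
      Filter.atTop (nhds (green d x y)) := (hsum x y).hasSum.tendsto_sum_nat
  have h2 := h1.const_mul (c y)
  refine h2.congr fun N => ?_
  congr 1
  rw [Finset.range_eq_Ico]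

end GaugeAux
namespace GaugeAux

variable {d : ℕ}

/-- Hull of the support of `vFn` together with its neighbors. -/
def TS (s : Finset (Zd d)) (M N : ℕ) : Finset (Zd d) :=
  VS s M N ∪ (VS s M N).biUnion nbhd

lemma vFn_mem_TS {s : Finset (Zd d)} {c : Zd d → ℝ} {M N : ℕ} :
    ∀ x, vFn s c M N x ≠ 0 → x ∈ TS s M N := by
  intro x hx
  by_contra hc
  exact hx (vFn_eq_zero (fun hm => hc (Finset.subset_union_left hm)))

lemma vFn_nbhd_TS {s : Finset (Zd d)} {c : Zd d → ℝ} {M N : ℕ} :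
    ∀ x, vFn s c M N x ≠ 0 → nbhd x ⊆ TS s M N := by
  intro x hx
  have hxV : x ∈ VS s M N := by
    by_contra hc
    exact hx (vFn_eq_zero hc)
  exact (Finset.subset_biUnion_of_mem _ hxV).trans Finset.subset_union_right

/-- Dirichlet summand of the truncated function. -/
def bT (s : Finset (Zd d)) (c : Zd d → ℝ) (M N : ℕ) (p : Zd d × Zd d) : ℝ :=
  if (∑ i, |p.1 i - p.2 i|) = 1
    then (vFn s c M N p.2 - vFn s c M N p.1) * (vFn s c M N p.2 - vFn s c M N p.1) else 0

/-- `u = ∑_y c_y g(·,y)`. -/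
def uG (s : Finset (Zd d)) (c : Zd d → ℝ) (x : Zd d) : ℝ := ∑ y ∈ s, c y * green d x y

/-- Dirichlet summand of `u`. -/
def aI (s : Finset (Zd d)) (c : Zd d → ℝ) (p : Zd d × Zd d) : ℝ :=
  if (∑ i, |p.1 i - p.2 i|) = 1
    then (uG s c p.2 - uG s c p.1) * (uG s c p.2 - uG s c p.1) else 0

lemma bT_nonneg (s : Finset (Zd d)) (c : Zd d → ℝ) (M N : ℕ) (p : Zd d × Zd d) :
    0 ≤ bT s c M N p := by
  unfold bT
  split
  · exact mul_self_nonneg _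
  · exact le_refl 0

lemma aI_nonneg (s : Finset (Zd d)) (c : Zd d → ℝ) (p : Zd d × Zd d) :
    0 ≤ aI s c p := by
  unfold aI
  split
  · exact mul_self_nonneg _
  · exact le_refl 0

lemma bT_eq_zero {s : Finset (Zd d)} {c : Zd d → ℝ} {M N : ℕ} :
    ∀ p ∉ (TS s M N) ×ˢ (TS s M N), bT s c M N p = 0 :=
  dir_zero (vFn s c M N) (TS s M N) vFn_mem_TS vFn_nbhd_TS

lemma bT_summable (s : Finset (Zd d)) (c : Zd d → ℝ) (M N : ℕ) :
    Summable (bT s c M N) :=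
  summable_of_ne_finset_zero (s := (TS s M N) ×ˢ (TS s M N)) bT_eq_zero

lemma bT_tsum (hd : d ≠ 0) (s : Finset (Zd d)) (c : Zd d → ℝ) {M N : ℕ} (hMN : M ≤ N) :
    ∑' p, bT s c M N p = 4*(d:ℝ) * ∑ y ∈ s, ∑ y' ∈ s, c y * c y' *
      ∑ n ∈ Finset.Ico M N, (srwP d (n+M) y' y - srwP d (n+N) y' y) :=
  energy_vFn hd s c hMN

end GaugeAux
namespace GaugeAux

variable {d : ℕ}

open Filter

/-- The uniform tail bound for the energy of `vFn s c M N`. -/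
lemma Ew_le_eps (hsum : ∀ x y, Summable fun n => srwP d n x y)
    (s : Finset (Zd d)) (c : Zd d → ℝ) {M N : ℕ} (hMN : M ≤ N) :
    4*(d:ℝ) * ∑ y ∈ s, ∑ y' ∈ s, c y * c y' *
        ∑ n ∈ Finset.Ico M N, (srwP d (n+M) y' y - srwP d (n+N) y' y)
      ≤ 4*(d:ℝ) * ∑ y ∈ s, ∑ y' ∈ s, |c y| * |c y'| * (2 * tailG (M+M) y' y) := by
  have hd4 : (0:ℝ) ≤ 4*(d:ℝ) := by positivity
  apply mul_le_mul_of_nonneg_left _ hd4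
  apply Finset.sum_le_sum
  intro y _
  apply Finset.sum_le_sum
  intro y' _
  have hA : ∑ n ∈ Finset.Ico M N, srwP d (n+M) y' y ≤ tailG (M+M) y' y :=
    sum_Ico_le_tail (hsum y' y) M N M le_rfl
  have hB : ∑ n ∈ Finset.Ico M N, srwP d (n+N) y' y ≤ tailG (M+M) y' y := by
    refine le_trans (sum_Ico_le_tail (hsum y' y) M N N le_rfl) ?_
    exact tailG_anti (hsum y' y) (by omega)
  have hA0 : 0 ≤ ∑ n ∈ Finset.Ico M N, srwP d (n+M) y' y :=
    Finset.sum_nonneg fun n _ => srwP_nonneg _ y' y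
  have hB0 : 0 ≤ ∑ n ∈ Finset.Ico M N, srwP d (n+N) y' y :=
    Finset.sum_nonneg fun n _ => srwP_nonneg _ y' y
  have habs : |∑ n ∈ Finset.Ico M N, (srwP d (n+M) y' y - srwP d (n+N) y' y)|
      ≤ 2 * tailG (M+M) y' y := by
    rw [Finset.sum_sub_distrib]
    apply abs_le.2
    constructor
    · linarith
    · linarith
  calc c y * c y' * ∑ n ∈ Finset.Ico M N, (srwP d (n+M) y' y - srwP d (n+N) y' y)
      ≤ |c y * c y' * ∑ n ∈ Finset.Ico M N, (srwP d (n+M) y' y - srwP d (n+N) y' y)| :=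
        le_abs_self _
    _ = |c y| * |c y'| * |∑ n ∈ Finset.Ico M N, (srwP d (n+M) y' y - srwP d (n+N) y' y)| := by
        rw [abs_mul, abs_mul]
    _ ≤ |c y| * |c y'| * (2 * tailG (M+M) y' y) :=
        mul_le_mul_of_nonneg_left habs (mul_nonneg (abs_nonneg _) (abs_nonneg _))

lemma eps_tendsto (hsum : ∀ x y, Summable fun n => srwP d n x y)
    (s : Finset (Zd d)) (c : Zd d → ℝ) :
    Tendsto (fun M => 4*(d:ℝ) * ∑ y ∈ s, ∑ y' ∈ s,
      |c y| * |c y'| * (2 * tailG (M+M) y' y)) atTop (nhds 0) := by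
  have hMM : Tendsto (fun M : ℕ => M + M) atTop atTop :=
    tendsto_atTop_mono (fun n => Nat.le_add_right n n) tendsto_id
  have hin : Tendsto (fun M => ∑ y ∈ s, ∑ y' ∈ s,
      |c y| * |c y'| * (2 * tailG (M+M) y' y)) atTop (nhds 0) := by
    have h0 : (0:ℝ) = ∑ y ∈ s, ∑ y' ∈ s, (0:ℝ) := by simp
    rw [h0]
    apply tendsto_finset_sum
    intro y _
    have h0' : (0:ℝ) = ∑ y' ∈ s, (0:ℝ) := by simp
    rw [h0']
    apply tendsto_finset_sum
    intro y' _
    have ht : Tendsto (fun M => tailG (M+M) y' y) atTop (nhds 0) :=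
      (tailG_tendsto_zero (hsum y' y)).comp hMM
    have := (ht.const_mul (2:ℝ)).const_mul (|c y| * |c y'|)
    simpa using this
  have := hin.const_mul (4*(d:ℝ))
  simpa using this

lemma aT_tendsto (hsum : ∀ x y, Summable fun n => srwP d n x y)
    (s : Finset (Zd d)) (c : Zd d → ℝ) (p : Zd d × Zd d) :
    Tendsto (fun N => bT s c 0 N p) atTop (nhds (aI s c p)) := by
  by_cases hadj : (∑ i, |p.1 i - p.2 i|) = 1
  · have h1 : Tendsto (fun N => vFn s c 0 N p.2 - vFn s c 0 N p.1) atTop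
        (nhds (uG s c p.2 - uG s c p.1)) :=
      (vFn_tendsto hsum s c p.2).sub (vFn_tendsto hsum s c p.1)
    have h2 := h1.mul h1
    have heq : ∀ N, (vFn s c 0 N p.2 - vFn s c 0 N p.1)
        * (vFn s c 0 N p.2 - vFn s c 0 N p.1) = bT s c 0 N p := by
      intro N
      unfold bT
      rw [if_pos hadj]
    have heq2 : aI s c p = (uG s c p.2 - uG s c p.1) * (uG s c p.2 - uG s c p.1) := by
      unfold aI
      rw [if_pos hadj]
    rw [heq2]
    exact h2.congr heq
  · have heq : ∀ N, bT s c 0 N p = 0 := by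
      intro N
      unfold bT
      rw [if_neg hadj]
    have heq2 : aI s c p = 0 := by
      unfold aI
      rw [if_neg hadj]
    rw [heq2]
    exact tendsto_const_nhds.congr fun N => (heq N).symm

lemma EN_tendsto (hsum : ∀ x y, Summable fun n => srwP d n x y)
    (s : Finset (Zd d)) (c : Zd d → ℝ) :
    Tendsto (fun N => 4*(d:ℝ) * ∑ y ∈ s, ∑ y' ∈ s, c y * c y' *
        ∑ n ∈ Finset.Ico 0 N, (srwP d (n+0) y' y - srwP d (n+N) y' y)) atTop
      (nhds (4*(d:ℝ) * ∑ y ∈ s, ∑ y' ∈ s, c y * c y' * green d y' y)) := by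
  apply Tendsto.const_mul
  apply tendsto_finset_sum
  intro y _
  apply tendsto_finset_sum
  intro y' _
  apply Tendsto.const_mul
  have h1 : Tendsto (fun N => ∑ n ∈ Finset.Ico 0 N, srwP d (n+0) y' y) atTop
      (nhds (green d y' y)) := by
    have := (hsum y' y).hasSum.tendsto_sum_nat
    refine this.congr fun N => ?_
    rw [Finset.range_eq_Ico]
    exact Finset.sum_congr rfl fun n _ => by rw [Nat.add_zero]
  have h2 : Tendsto (fun N => ∑ n ∈ Finset.Ico 0 N, srwP d (n+N) y' y) atTop
      (nhds 0) := by
    apply squeeze_zero (fun N => Finset.sum_nonneg fun n _ => srwP_nonneg _ y' y)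
      (g := fun N => tailG N y' y)
    · intro N
      have := sum_Ico_le_tail (hsum y' y) 0 N N le_rfl
      simpa using this
    · exact tailG_tendsto_zero (hsum y' y)
  have h3 := h1.sub h2
  rw [sub_zero] at h3
  refine h3.congr fun N => ?_
  rw [← Finset.sum_sub_distrib]
end GaugeAux
namespace GaugeAux

variable {d : ℕ}

open Filter

/-- Main identity: the Dirichlet energy of `u = ∑_y c_y g(·,y)` equals
`4d ∑_{y,y'} c_y c_{y'} g(y',y)`. -/
lemma main_energy (hd : d ≠ 0) (hsum : ∀ x y, Summable fun n => srwP d n x y)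
    (s : Finset (Zd d)) (c : Zd d → ℝ) :
    ∑' p, aI s c p
      = 4*(d:ℝ) * ∑ y ∈ s, ∑ y' ∈ s, c y * c y' * green d y' y := by
  have haT_tsum : ∀ N : ℕ, ∑' p, bT s c 0 N p
      = 4*(d:ℝ) * ∑ y ∈ s, ∑ y' ∈ s, c y * c y' *
          ∑ n ∈ Finset.Ico 0 N, (srwP d (n+0) y' y - srwP d (n+N) y' y) :=
    fun N => bT_tsum hd s c (Nat.zero_le N)
  have hEN := EN_tendsto hsum s c
  have hPle : ∀ (P : Finset (Zd d × Zd d)) (N : ℕ), ∑ p ∈ P, bT s c 0 N p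
      ≤ 4*(d:ℝ) * ∑ y ∈ s, ∑ y' ∈ s, c y * c y' *
          ∑ n ∈ Finset.Ico 0 N, (srwP d (n+0) y' y - srwP d (n+N) y' y) :=
    fun P N => le_of_le_of_eq
      (Summable.sum_le_tsum P (fun p _ => bT_nonneg s c 0 N p) (bT_summable s c 0 N))
      (haT_tsum N)
  have hPconv : ∀ P : Finset (Zd d × Zd d),
      Tendsto (fun N => ∑ p ∈ P, bT s c 0 N p) atTop (nhds (∑ p ∈ P, aI s c p)) :=
    fun P => tendsto_finset_sum _ (fun p _ => aT_tendsto hsum s c p)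
  have hPaI : ∀ P : Finset (Zd d × Zd d), ∑ p ∈ P, aI s c p
      ≤ 4*(d:ℝ) * ∑ y ∈ s, ∑ y' ∈ s, c y * c y' * green d y' y :=
    fun P => le_of_tendsto_of_tendsto' (hPconv P) hEN (hPle P)
  have hsumaI : Summable (aI s c) :=
    summable_of_sum_le (fun p => aI_nonneg s c p) hPaI
  have hub := Summable.tsum_le_of_sum_le hsumaI hPaI
  refine le_antisymm hub ?_
  apply le_of_forall_pos_le_add
  intro ε hε
  obtain ⟨M, hM⟩ := ((eps_tendsto hsum s c).eventually_lt_const hε).exists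
  have key : ∀ N, M ≤ N →
      4*(d:ℝ) * (∑ y ∈ s, ∑ y' ∈ s, c y * c y' *
          ∑ n ∈ Finset.Ico 0 N, (srwP d (n+0) y' y - srwP d (n+N) y' y))
      ≤ (∑ p ∈ (TS s 0 M) ×ˢ (TS s 0 M), bT s c 0 N p)
        + 4*(d:ℝ) * ∑ y ∈ s, ∑ y' ∈ s, |c y| * |c y'| * (2 * tailG (M+M) y' y) := by
    intro N hMN
    have htsumQ : ∑' p, bT s c 0 N p
        = ∑ p ∈ (TS s 0 M) ×ˢ (TS s 0 M) ∪ (TS s 0 N) ×ˢ (TS s 0 N), bT s c 0 N p :=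
      tsum_eq_sum (fun p hp => bT_eq_zero p (fun hc => hp (Finset.mem_union_right _ hc)))
    have hPQ : (TS s 0 M) ×ˢ (TS s 0 M)
        ⊆ (TS s 0 M) ×ˢ (TS s 0 M) ∪ (TS s 0 N) ×ˢ (TS s 0 N) := Finset.subset_union_left
    have hsplit := Finset.sum_sdiff (f := bT s c 0 N) hPQ
    have hbb : ∀ p ∈ ((TS s 0 M) ×ˢ (TS s 0 M) ∪ (TS s 0 N) ×ˢ (TS s 0 N)) \
        ((TS s 0 M) ×ˢ (TS s 0 M)), bT s c 0 N p = bT s c M N p := by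
      intro p hp
      have hpP : p ∉ (TS s 0 M) ×ˢ (TS s 0 M) := (Finset.mem_sdiff.1 hp).2
      have h0 : bT s c 0 M p = 0 := bT_eq_zero p hpP
      unfold bT at h0 ⊢
      by_cases hadj : (∑ i, |p.1 i - p.2 i|) = 1
      · rw [if_pos hadj] at h0 ⊢
        rw [if_pos hadj]
        have hzero : vFn s c 0 M p.2 - vFn s c 0 M p.1 = 0 := mul_self_eq_zero.1 h0
        have e2 := vFn_split s c hMN p.2
        have e1 := vFn_split s c hMN p.1
        have heq : vFn s c 0 N p.2 - vFn s c 0 N p.1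
            = vFn s c M N p.2 - vFn s c M N p.1 := by
          rw [e1, e2]
          linarith
        rw [heq]
      · rw [if_neg hadj, if_neg hadj]
    have hdiff : ∑ p ∈ ((TS s 0 M) ×ˢ (TS s 0 M) ∪ (TS s 0 N) ×ˢ (TS s 0 N)) \
        ((TS s 0 M) ×ˢ (TS s 0 M)), bT s c 0 N p
        ≤ 4*(d:ℝ) * ∑ y ∈ s, ∑ y' ∈ s, |c y| * |c y'| * (2 * tailG (M+M) y' y) := by
      rw [Finset.sum_congr rfl hbb]
      calc ∑ p ∈ ((TS s 0 M) ×ˢ (TS s 0 M) ∪ (TS s 0 N) ×ˢ (TS s 0 N)) \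
          ((TS s 0 M) ×ˢ (TS s 0 M)), bT s c M N p
          ≤ ∑' p, bT s c M N p :=
            Summable.sum_le_tsum _ (fun p _ => bT_nonneg s c M N p) (bT_summable s c M N)
        _ = 4*(d:ℝ) * ∑ y ∈ s, ∑ y' ∈ s, c y * c y' *
              ∑ n ∈ Finset.Ico M N, (srwP d (n+M) y' y - srwP d (n+N) y' y) :=
            bT_tsum hd s c hMN
        _ ≤ 4*(d:ℝ) * ∑ y ∈ s, ∑ y' ∈ s, |c y| * |c y'| * (2 * tailG (M+M) y' y) :=
            Ew_le_eps hsum s c hMN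
    have hEq : 4*(d:ℝ) * (∑ y ∈ s, ∑ y' ∈ s, c y * c y' *
        ∑ n ∈ Finset.Ico 0 N, (srwP d (n+0) y' y - srwP d (n+N) y' y))
        = ∑ p ∈ (TS s 0 M) ×ˢ (TS s 0 M) ∪ (TS s 0 N) ×ˢ (TS s 0 N), bT s c 0 N p := by
      rw [← htsumQ, haT_tsum N]
    linarith [hsplit, hdiff, hEq]
  have hlim1 : Tendsto (fun N => (∑ p ∈ (TS s 0 M) ×ˢ (TS s 0 M), bT s c 0 N p)
      + 4*(d:ℝ) * ∑ y ∈ s, ∑ y' ∈ s, |c y| * |c y'| * (2 * tailG (M+M) y' y)) atTop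
      (nhds ((∑ p ∈ (TS s 0 M) ×ˢ (TS s 0 M), aI s c p)
        + 4*(d:ℝ) * ∑ y ∈ s, ∑ y' ∈ s, |c y| * |c y'| * (2 * tailG (M+M) y' y))) :=
    (hPconv _).add tendsto_const_nhds
  have hfin : 4*(d:ℝ) * ∑ y ∈ s, ∑ y' ∈ s, c y * c y' * green d y' y
      ≤ (∑ p ∈ (TS s 0 M) ×ˢ (TS s 0 M), aI s c p)
        + 4*(d:ℝ) * ∑ y ∈ s, ∑ y' ∈ s, |c y| * |c y'| * (2 * tailG (M+M) y' y) := by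
    refine le_of_tendsto_of_tendsto hEN hlim1 ?_
    exact Filter.eventually_atTop.2 ⟨M, key⟩
  have hsle : ∑ p ∈ (TS s 0 M) ×ˢ (TS s 0 M), aI s c p ≤ ∑' p, aI s c p :=
    Summable.sum_le_tsum _ (fun p _ => aI_nonneg s c p) hsumaI
  linarith [le_of_lt hM]

end GaugeAux
namespace GaugeAux

variable {d : ℕ}

lemma green_symm (x y : Zd d) : green d x y = green d y x :=
  tsum_congr fun n => srwP_symm n x y

end GaugeAux

open GaugeAux in
/-- Energy identity for the gauge function:
`⟨V, γ_V²⟩ − ⟨V, γ_V⟩ = 𝓔_{ℤ^d}(γ_V − 1, γ_V − 1)`. -/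
theorem gauge_dirichlet_identity (d : ℕ) (hd : 3 ≤ d) (V : Zd d → ℝ)
    (hVfin : (Function.support V).Finite) (hV : greenNormLtOne d V) :
    pairZ d V (fun x => (gaugeFn d V x) ^ 2) - pairZ d V (gaugeFn d V)
      = dirichletZ d (fun x => gaugeFn d V x - 1) (fun x => gaugeFn d V x - 1) := by
  classical
  obtain ⟨c₀, hc1, hc⟩ := hV
  have hd0 : d ≠ 0 := by omega
  by_cases hS : ∀ x y : Zd d, Summable fun n => srwP d n x y
  · -- transient (summable) case: the real proof
    have hdR : (0:ℝ) < (d:ℝ) := by exact_mod_cast Nat.pos_of_ne_zero hd0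
    have hfix : ∀ x, gaugeFn d V x - 1
        = uG hVfin.toFinset (fun y => V y * gaugeFn d V y) x := by
      intro x
      simp only [uG]
      rw [gauge_fixed V hVfin c₀ hc hc1 x, add_sub_cancel_left]
      exact Finset.sum_congr rfl fun y _ =>
        mul_comm (green d x y) (V y * gaugeFn d V y)
    have hME := main_energy hd0 hS hVfin.toFinset (fun y => V y * gaugeFn d V y)
    have hL1 : pairZ d V (fun x => gaugeFn d V x ^ 2)
        = ∑ z ∈ hVfin.toFinset, V z * gaugeFn d V z ^ 2 := by
      unfold pairZ
      apply tsum_eq_sum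
      intro z hz
      have hvz : V z = 0 := by
        by_contra hvz
        exact hz (hVfin.mem_toFinset.2 hvz)
      rw [hvz, zero_mul]
    have hL2 : pairZ d V (gaugeFn d V) = ∑ z ∈ hVfin.toFinset, V z * gaugeFn d V z := by
      unfold pairZ
      apply tsum_eq_sum
      intro z hz
      have hvz : V z = 0 := by
        by_contra hvz
        exact hz (hVfin.mem_toFinset.2 hvz)
      rw [hvz, zero_mul]
    have hR : dirichletZ d (fun x => gaugeFn d V x - 1) (fun x => gaugeFn d V x - 1)
        = (1 / (4 * (d:ℝ))) *
          ∑' p, aI hVfin.toFinset (fun y => V y * gaugeFn d V y) p := by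
      unfold dirichletZ
      congr 1
      apply tsum_congr
      intro p
      simp only [aI]
      by_cases hadj : (∑ i, |p.1 i - p.2 i|) = 1
      · rw [if_pos hadj, if_pos hadj, hfix p.2, hfix p.1]
      · rw [if_neg hadj, if_neg hadj]
    rw [hL1, hL2, hR, hME]
    have hcoef : (1 / (4 * (d:ℝ))) * (4*(d:ℝ) * ∑ y ∈ hVfin.toFinset,
        ∑ y' ∈ hVfin.toFinset, (V y * gaugeFn d V y) * (V y' * gaugeFn d V y') * green d y' y)
        = ∑ y ∈ hVfin.toFinset, ∑ y' ∈ hVfin.toFinset,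
          (V y * gaugeFn d V y) * (V y' * gaugeFn d V y') * green d y' y := by
      have h4d : (4*(d:ℝ)) ≠ 0 := by positivity
      field_simp
    rw [hcoef, ← Finset.sum_sub_distrib]
    have hterm : ∀ z ∈ hVfin.toFinset, V z * gaugeFn d V z ^ 2 - V z * gaugeFn d V z
        = (V z * gaugeFn d V z) * (gaugeFn d V z - 1) := by
      intro z _
      ring
    rw [Finset.sum_congr rfl hterm]
    have hterm2 : ∀ z ∈ hVfin.toFinset, (V z * gaugeFn d V z) * (gaugeFn d V z - 1)
        = ∑ y' ∈ hVfin.toFinset,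
          (V z * gaugeFn d V z) * (V y' * gaugeFn d V y') * green d y' z := by
      intro z _
      rw [hfix z]
      simp only [uG]
      rw [Finset.mul_sum]
      apply Finset.sum_congr rfl
      intro y' _
      rw [green_symm z y']
      ring
    rw [Finset.sum_congr rfl hterm2]
  · -- recurrent (non-summable) case: `green ≡ 0`, `γ ≡ 1`, both sides vanish
    have hnot : ∀ x y : Zd d, ¬ Summable fun n => srwP d n x y := by
      intro x y hxy
      exact hS (fun x' y' => sg_all hd0 hxy x' y')
    have hgreen : ∀ x y : Zd d, green d x y = 0 := fun x y =>
      tsum_eq_zero_of_not_summable (hnot x y)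
    have hGzero : ∀ (g : Zd d → ℝ) (x : Zd d), GVop d V g x = 0 := by
      intro g x
      unfold GVop Gop
      have hzz : ∀ y : Zd d, green d x y * (V y * g y) = 0 := fun y => by
        rw [hgreen, zero_mul]
      rw [tsum_congr hzz, tsum_zero]
    have hgauge : ∀ x, gaugeFn d V x = 1 := by
      intro x
      unfold gaugeFn neumann
      have hiter : ∀ n : ℕ, (GVop d V)^[n] (fun _ => (1:ℝ)) x
          = if n = 0 then 1 else 0 := by
        intro n
        cases n with
        | zero => simp
        | succ n =>
          rw [Function.iterate_succ_apply', hGzero]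
          simp
      rw [tsum_congr hiter, tsum_ite_eq]
    have hLHS : pairZ d V (fun x => gaugeFn d V x ^ 2) - pairZ d V (gaugeFn d V) = 0 := by
      unfold pairZ
      have h1 : ∀ z, V z * (gaugeFn d V z) ^ 2 = V z * gaugeFn d V z := by
        intro z
        rw [hgauge]
        ring
      rw [tsum_congr h1]
      ring
    rw [hLHS]
    unfold dirichletZ
    have h2 : ∀ p : Zd d × Zd d, (if (∑ i, |p.1 i - p.2 i|) = 1
        then ((gaugeFn d V p.2 - 1) - (gaugeFn d V p.1 - 1))
          * ((gaugeFn d V p.2 - 1) - (gaugeFn d V p.1 - 1)) else 0) = 0 := by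
      intro p
      rw [hgauge, hgauge]
      norm_num
    rw [tsum_congr h2, tsum_zero, mul_zero]
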